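/- Let Q be an inverse quantal frame and X a Q-sheaf. Then every principal section s of X is a right local section: for all x ∈ X with x ≤ s one has x = s ∧ 1_Q·x. (Hence in a principal Q-sheaf the set of principal sections coincides with the set of local bisections.) -/

import Mathlib

/-- A unital involutive quantale: a complete lattice with an associative
multiplication preserving arbitrary joins in each variable, a unit `e`, and a
join-preserving involution. -/
structure QuantaleStruct (Q : Type*) [CompleteLattice Q] where
  mul : Q → Q → Q
  e : Q
  star : Q → Q
  mul_assoc : ∀ a b c, mul (mul a b) c = mul a (mul b c)
  sSup_mul : ∀ (S : Set Q) (b : Q), mul (sSup S) b = ⨆ a ∈ S, mul a b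
  mul_sSup : ∀ (a : Q) (S : Set Q), mul a (sSup S) = ⨆ b ∈ S, mul a b
  e_mul : ∀ a, mul e a = a
  mul_e : ∀ a, mul a e = a
  star_star : ∀ a, star (star a) = a
  star_mul : ∀ a b, star (mul a b) = mul (star b) (star a)
  star_sSup : ∀ S : Set Q, star (sSup S) = ⨆ a ∈ S, star a

/-- The set of partial units of a quantale. -/
def QuantaleStruct.PU {Q : Type*} [CompleteLattice Q] (Qs : QuantaleStruct Q) : Set Q :=
  {s | Qs.mul s (Qs.star s) ≤ Qs.e ∧ Qs.mul (Qs.star s) s ≤ Qs.e}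

/-- An inverse quantal frame: a unital involutive quantale which is a frame,
has a stable support, and whose partial units join to the top. -/
structure InverseQuantalFrame (Q : Type*) [Order.Frame Q] extends toQuantale : QuantaleStruct Q where
  supp : Q → Q
  supp_le_e : ∀ a, supp a ≤ e
  supp_sSup : ∀ S : Set Q, supp (sSup S) = ⨆ a ∈ S, supp a
  supp_le_mul_star : ∀ a, supp a ≤ mul a (star a)
  le_supp_mul : ∀ a, a ≤ mul (supp a) a
  supp_stable : ∀ b a, b ≤ e → supp (mul b a) = mul b (supp a)
  sSup_PU : sSup {s | mul s (star s) ≤ e ∧ mul (star s) s ≤ e} = ⊤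

/-- A left module over a quantale: a complete lattice with a unital associative
action preserving arbitrary joins in each variable. -/
structure QuantaleModule {Q : Type*} [CompleteLattice Q] (Qs : QuantaleStruct Q)
    (X : Type*) [CompleteLattice X] where
  act : Q → X → X
  act_mul : ∀ a b x, act (Qs.mul a b) x = act a (act b x)
  act_e : ∀ x, act Qs.e x = x
  sSup_act : ∀ (S : Set Q) (x : X), act (sSup S) x = ⨆ a ∈ S, act a x
  act_sSup : ∀ (a : Q) (S : Set X), act a (sSup S) = ⨆ x ∈ S, act a x

/-- A pre-Hilbert module over a quantale. -/
structure PreHilbertModule {Q : Type*} [CompleteLattice Q] (Qs : QuantaleStruct Q)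
    (X : Type*) [CompleteLattice X] extends QuantaleModule Qs X where
  inner : X → X → Q
  inner_act : ∀ a x y, inner (act a x) y = Qs.mul a (inner x y)
  sSup_inner : ∀ (S : Set X) (y : X), inner (sSup S) y = ⨆ x ∈ S, inner x y
  inner_star : ∀ x y, inner x y = Qs.star (inner y x)

namespace PreHilbertModule

variable {Q X : Type*} [CompleteLattice Q] [CompleteLattice X] {Qs : QuantaleStruct Q}

/-- A Hilbert section: `⟨x,s⟩s ≤ x` for all `x`. -/
def IsHilbertSection (H : PreHilbertModule Qs X) (s : X) : Prop :=
  ∀ x, H.act (H.inner x s) s ≤ x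

/-- A regular element: `⟨s,s⟩s = s`. -/
def IsRegularSection (H : PreHilbertModule Qs X) (s : X) : Prop :=
  H.act (H.inner s s) s = s

/-- A Hilbert basis: `x = ⋁_{t ∈ S} ⟨x,t⟩t` for all `x`. -/
def IsHilbertBasis (H : PreHilbertModule Qs X) (S : Set X) : Prop :=
  ∀ x, x = ⨆ t ∈ S, H.act (H.inner x t) t

/-- Non-degeneracy of the inner product. -/
def Nondegenerate (H : PreHilbertModule Qs X) : Prop :=
  ∀ x y, (∀ z, H.inner x z = H.inner y z) → x = y

end PreHilbertModule

/-- A `Q`-locale over an inverse quantal frame: a module which is a frame and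
satisfies the anchor condition. -/
structure QLocale {Q : Type*} [Order.Frame Q] (Qf : InverseQuantalFrame Q)
    (X : Type*) [Order.Frame X] extends QuantaleModule Qf.toQuantale X where
  anchor : ∀ b x, b ≤ Qf.e → act b x = act b ⊤ ⊓ x

/-- A `Q`-sheaf over an inverse quantal frame: a pre-Hilbert module which is a
frame, satisfies the anchor condition, and has a Hilbert basis. -/
structure QSheaf {Q : Type*} [Order.Frame Q] (Qf : InverseQuantalFrame Q)
    (X : Type*) [Order.Frame X] extends PreHilbertModule Qf.toQuantale X where
  anchor : ∀ b x, b ≤ Qf.e → act b x = act b ⊤ ⊓ x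
  hasBasis : ∃ S : Set X, ∀ x, x = ⨆ t ∈ S, act (inner x t) t

namespace QSheaf

variable {Q X : Type*} [Order.Frame Q] [Order.Frame X] {Qf : InverseQuantalFrame Q}

/-- The support `ς_X(x) = ⟨x,x⟩ ∧ e` of a `Q`-sheaf. -/
def sppX (H : QSheaf Qf X) (x : X) : Q := H.inner x x ⊓ Qf.e

/-- A local section: `ς_X(x)s = x` for all `x ≤ s`. -/
def IsLocalSection (H : QSheaf Qf X) (s : X) : Prop :=
  ∀ x ≤ s, H.act (H.sppX x) s = x

/-- A principal section: a local section with `⟨s,s⟩ ≤ e`. -/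
def IsPrincipalSection (H : QSheaf Qf X) (s : X) : Prop :=
  H.IsLocalSection s ∧ H.inner s s ≤ Qf.e

/-- A right local section: `x = s ∧ 1_Q·x` for all `x ≤ s`. -/
def IsRightLocalSection (H : QSheaf Qf X) (s : X) : Prop :=
  ∀ x ≤ s, x = s ⊓ H.act ⊤ x

/-- A local bisection: simultaneously a local section and a right local section. -/
def IsBisection (H : QSheaf Qf X) (s : X) : Prop :=
  H.IsLocalSection s ∧ H.IsRightLocalSection s

end QSheaf

section Helpers

variable {Q : Type*} [CompleteLattice Q] (Qs : QuantaleStruct Q)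

lemma q_mul_mono {a b c d : Q} (h1 : a ≤ b) (h2 : c ≤ d) :
    Qs.mul a c ≤ Qs.mul b d := by
  have hl : Qs.mul a c ≤ Qs.mul b c := by
    have h := Qs.sSup_mul {a, b} c
    rw [sSup_pair, sup_eq_right.mpr h1] at h
    rw [h]
    exact le_biSup (fun x => Qs.mul x c) (by simp)
  have hr : Qs.mul b c ≤ Qs.mul b d := by
    have h := Qs.mul_sSup b {c, d}
    rw [sSup_pair, sup_eq_right.mpr h2] at h
    rw [h]
    exact le_biSup (fun x => Qs.mul b x) (by simp)
  exact hl.trans hr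

lemma q_star_mono {a b : Q} (h : a ≤ b) : Qs.star a ≤ Qs.star b := by
  have hh := Qs.star_sSup {a, b}
  rw [sSup_pair, sup_eq_right.mpr h] at hh
  rw [hh]
  exact le_biSup (fun x => Qs.star x) (by simp)

lemma q_star_e : Qs.star Qs.e = Qs.e := by
  have h := Qs.star_mul Qs.e (Qs.star Qs.e)
  rw [Qs.e_mul, Qs.star_star, Qs.e_mul] at h
  exact h.symm

lemma qm_act_mono {X : Type*} [CompleteLattice X] (M : QuantaleModule Qs X)
    {a b : Q} {x y : X} (h1 : a ≤ b) (h2 : x ≤ y) : M.act a x ≤ M.act b y := by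
  have hl : M.act a x ≤ M.act b x := by
    have h := M.sSup_act {a, b} x
    rw [sSup_pair, sup_eq_right.mpr h1] at h
    rw [h]
    exact le_biSup (fun c => M.act c x) (by simp)
  have hr : M.act b x ≤ M.act b y := by
    have h := M.act_sSup b {x, y}
    rw [sSup_pair, sup_eq_right.mpr h2] at h
    rw [h]
    exact le_biSup (fun z => M.act b z) (by simp)
  exact hl.trans hr

lemma ph_inner_mono {X : Type*} [CompleteLattice X] (H : PreHilbertModule Qs X)
    {x y z w : X} (h1 : x ≤ y) (h2 : z ≤ w) : H.inner x z ≤ H.inner y w := by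
  have mono1 : ∀ {u v : X} (c : X), u ≤ v → H.inner u c ≤ H.inner v c := by
    intro u v c huv
    have h := H.sSup_inner {u, v} c
    rw [sSup_pair, sup_eq_right.mpr huv] at h
    rw [h]
    exact le_biSup (fun t => H.inner t c) (by simp)
  have hl : H.inner x z ≤ H.inner y z := mono1 z h1
  have hr : H.inner y z ≤ H.inner y w := by
    rw [H.inner_star y z, H.inner_star y w]
    exact q_star_mono Qs (mono1 y h2)
  exact hl.trans hr

end Helpers

section IQFHelpers

variable {Q : Type*} [Order.Frame Q] (Qf : InverseQuantalFrame Q)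

lemma iqf_le_star {b : Q} (hb : b ≤ Qf.e) : b ≤ Qf.star b := by
  have hbs : Qf.star b ≤ Qf.e :=
    (q_star_mono Qf.toQuantale hb).trans (q_star_e Qf.toQuantale).le
  have h1 : b ≤ Qf.mul b (Qf.star b) := by
    calc b ≤ Qf.mul (Qf.supp b) b := Qf.le_supp_mul b
      _ ≤ Qf.mul (Qf.mul b (Qf.star b)) b :=
          q_mul_mono Qf.toQuantale (Qf.supp_le_mul_star b) le_rfl
      _ ≤ Qf.mul (Qf.mul b (Qf.star b)) Qf.e := q_mul_mono Qf.toQuantale le_rfl hb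
      _ = Qf.mul b (Qf.star b) := Qf.mul_e _
  have h2 : Qf.mul b (Qf.star b) ≤ Qf.star b := by
    calc Qf.mul b (Qf.star b) ≤ Qf.mul Qf.e (Qf.star b) := q_mul_mono Qf.toQuantale hb le_rfl
      _ = Qf.star b := Qf.e_mul _
  exact h1.trans h2

lemma iqf_star_eq {b : Q} (hb : b ≤ Qf.e) : Qf.star b = b := by
  have hbs : Qf.star b ≤ Qf.e :=
    (q_star_mono Qf.toQuantale hb).trans (q_star_e Qf.toQuantale).le
  have h := iqf_le_star Qf hbs
  rw [Qf.star_star] at h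
  exact le_antisymm h (iqf_le_star Qf hb)

lemma iqf_le_mul_self {b : Q} (hb : b ≤ Qf.e) : b ≤ Qf.mul b b := by
  have h1 : b ≤ Qf.mul b (Qf.star b) := by
    calc b ≤ Qf.mul (Qf.supp b) b := Qf.le_supp_mul b
      _ ≤ Qf.mul (Qf.mul b (Qf.star b)) b :=
          q_mul_mono Qf.toQuantale (Qf.supp_le_mul_star b) le_rfl
      _ ≤ Qf.mul (Qf.mul b (Qf.star b)) Qf.e := q_mul_mono Qf.toQuantale le_rfl hb
      _ = Qf.mul b (Qf.star b) := Qf.mul_e _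
  rwa [iqf_star_eq Qf hb] at h1

end IQFHelpers

/-- Every principal section of a `Q`-sheaf is a right local
section: `x = s ∧ 1_Q·x` for all `x ≤ s`. -/
theorem stmt15 {Q X : Type*} [Order.Frame Q] [Order.Frame X]
    (Qf : InverseQuantalFrame Q) (H : QSheaf Qf X)
    (s : X) (hs : H.IsPrincipalSection s) :
    H.IsRightLocalSection s := by
  intro x hx
  have hloc := hs.1
  have hss : H.inner s s ≤ Qf.e := hs.2
  have hxs : H.act (H.sppX x) s = x := hloc x hx
  have hsx_le : H.sppX x ≤ Qf.e := inf_le_right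
  set a := H.inner s x with ha
  have haeq : a = Qf.mul (H.inner s s) (H.sppX x) := by
    have h1 : H.inner x s = Qf.mul (H.sppX x) (H.inner s s) := by
      conv_lhs => rw [← hxs]
      exact H.inner_act _ _ _
    rw [ha, H.inner_star s x, h1, Qf.star_mul, iqf_star_eq Qf hsx_le,
      iqf_star_eq Qf hss]
  have ha_le : a ≤ Qf.e := by
    rw [haeq]
    calc Qf.mul (H.inner s s) (H.sppX x) ≤ Qf.mul Qf.e (H.sppX x) :=
          q_mul_mono Qf.toQuantale hss le_rfl
      _ = H.sppX x := Qf.e_mul _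
      _ ≤ Qf.e := hsx_le
  have h_act_a : H.act a s ≤ x := by
    rw [haeq, H.act_mul, hxs]
    calc H.act (H.inner s s) x ≤ H.act Qf.e x :=
          qm_act_mono Qf.toQuantale H.toQuantaleModule hss le_rfl
      _ = x := H.act_e x
  have keyB : ∀ t : Q, Qf.mul t (Qf.star t) ≤ Qf.e → Qf.mul (Qf.star t) t ≤ Qf.e →
      s ⊓ H.act t x ≤ x := by
    intro t ht1 ht2
    set z := s ⊓ H.act t x with hzdef
    have hz : H.act (H.sppX z) s = z := hloc z inf_le_left
    have hzz : H.inner z z ≤ Qf.mul a (Qf.star t) := by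
      have h1 : H.inner z z ≤ H.inner s (H.act t x) :=
        ph_inner_mono Qf.toQuantale H.toPreHilbertModule inf_le_left inf_le_right
      have h2 : H.inner s (H.act t x) = Qf.mul a (Qf.star t) := by
        rw [H.inner_star s (H.act t x), H.inner_act, Qf.star_mul, ← H.inner_star]
      exact h1.trans h2.le
    set u := H.sppX z with hu
    have hu_e : u ≤ Qf.e := inf_le_right
    have hu1 : u ≤ Qf.mul a (Qf.star t) := le_trans inf_le_left hzz
    have hu2 : u ≤ Qf.mul t a := by
      have h := q_star_mono Qf.toQuantale hu1
      rw [iqf_star_eq Qf hu_e, Qf.star_mul, Qf.star_star, iqf_star_eq Qf ha_le] at h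
      exact h
    have hu3 : u ≤ Qf.mul a a := by
      calc u ≤ Qf.mul u u := iqf_le_mul_self Qf hu_e
        _ ≤ Qf.mul (Qf.mul a (Qf.star t)) (Qf.mul t a) := q_mul_mono Qf.toQuantale hu1 hu2
        _ = Qf.mul a (Qf.mul (Qf.mul (Qf.star t) t) a) := by
            rw [Qf.mul_assoc a (Qf.star t) (Qf.mul t a),
              ← Qf.mul_assoc (Qf.star t) t a]
        _ ≤ Qf.mul a (Qf.mul Qf.e a) :=
            q_mul_mono Qf.toQuantale le_rfl (q_mul_mono Qf.toQuantale ht2 le_rfl)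
        _ = Qf.mul a a := by rw [Qf.e_mul]
    calc z = H.act u s := hz.symm
      _ ≤ H.act (Qf.mul a a) s :=
          qm_act_mono Qf.toQuantale H.toQuantaleModule hu3 le_rfl
      _ = H.act a (H.act a s) := H.act_mul a a s
      _ ≤ H.act a x := qm_act_mono Qf.toQuantale H.toQuantaleModule le_rfl h_act_a
      _ ≤ H.act Qf.e x := qm_act_mono Qf.toQuantale H.toQuantaleModule ha_le le_rfl
      _ = x := H.act_e x
  have htop : H.act ⊤ x =
      ⨆ t ∈ {t : Q | Qf.mul t (Qf.star t) ≤ Qf.e ∧ Qf.mul (Qf.star t) t ≤ Qf.e},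
        H.act t x := by
    rw [← Qf.sSup_PU]
    exact H.sSup_act _ x
  have hle : s ⊓ H.act ⊤ x ≤ x := by
    rw [htop]
    simp only [inf_iSup_eq]
    exact iSup₂_le fun t ht => keyB t ht.1 ht.2
  have hge : x ≤ s ⊓ H.act ⊤ x := by
    refine le_inf hx ?_
    calc x = H.act Qf.e x := (H.act_e x).symm
      _ ≤ H.act ⊤ x := qm_act_mono Qf.toQuantale H.toQuantaleModule le_top le_rfl
  exact le_antisymm hge hle
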